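/- arXiv:2510.02948 — 4 statements merged into one kernel-verified Lean document; each statement's English description precedes it below -/
import Mathlib

section
/- Let k ≤ n, let D be a symmetric n×n real matrix with D_{ij} = 0 whenever i > k or j > k, let q ∈ ℝⁿ with q ≥ 0 and q_i = 0 for i > k, let β ≥ 0, F ∈ ℝ^{M×n} and w ∈ ℝ^M. For i ∈ {1,…,k} define μ*_i := inf{ qᵀy + β y₀ : y ∈ ℝⁿ, y₀ ∈ ℝ, D_iᵀ y + q_i y₀ = −1, F y ≤ y₀ w, y ≥ 0, y₀ ≥ 0 } ∈ [0, +∞] (with μ*_i = +∞ if the feasible set is empty; D_i denotes the i-th column of D). If μ*_i > 0, then there exist v ∈ ℝ^M and s ∈ ℝⁿ with v ≥ 0, s ≥ 0 such that (μ*_i)^{-1} q + D_i + Fᵀv − s = 0 and (μ*_i)^{-1} β + q_i − wᵀv ≥ 0, where by convention (+∞)^{-1} = 0. -/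
open Matrix
open scoped ENNReal

open Matrix in
private lemma mulVec_eq_sum_cols {ι κ : Type*} [Fintype κ] (A : Matrix ι κ ℝ) (c : κ → ℝ) :
    A *ᵥ c = ∑ j, c j • (fun i => A i j) := by
  funext i
  rw [Finset.sum_apply]
  simp only [Pi.smul_apply, smul_eq_mul]
  simp [Matrix.mulVec, dotProduct, mul_comm]

open scoped Classical in
private lemma mulVec_eq_subtype_sum {ι κ : Type*} [Fintype κ] (A : Matrix ι κ ℝ) (c : κ → ℝ)
    (p : κ → Prop) (h : ∀ j, c j ≠ 0 → p j) :
    A *ᵥ c = ∑ j : Subtype p, c j.1 • (fun i => A i j.1) := by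
  rw [mulVec_eq_sum_cols]
  rw [← Finset.sum_subtype (Finset.univ.filter p) (by simp) (fun j => c j • (fun i => A i j))]
  refine (Finset.sum_filter_of_ne ?_).symm
  intro x _ hx
  refine h x fun hc => hx ?_
  rw [hc, zero_smul]

open scoped Classical in
private lemma carath {ι κ : Type*} [Fintype ι] [Fintype κ] (A : Matrix ι κ ℝ) (b : ι → ℝ) :
    ∀ (N : ℕ) (z : κ → ℝ), 0 ≤ z → A *ᵥ z = b →
      (Finset.univ.filter fun j => z j ≠ 0).card ≤ N →
    ∃ z' : κ → ℝ, 0 ≤ z' ∧ A *ᵥ z' = b ∧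
      LinearIndependent ℝ (fun j : {j // z' j ≠ 0} => (fun i => A i j.1)) := by
  intro N
  induction N with
  | zero =>
    intro z hz hzb hcard
    refine ⟨z, hz, hzb, ?_⟩
    have hz0 : ∀ j, z j = 0 := by
      intro j; by_contra hj
      have hmem : j ∈ Finset.univ.filter (fun j => z j ≠ 0) := by simp [hj]
      have := Finset.card_pos.mpr ⟨j, hmem⟩; omega
    have : IsEmpty {j // z j ≠ 0} := ⟨fun j => j.2 (hz0 j.1)⟩
    exact linearIndependent_empty_type
  | succ N ih =>
    intro z hz hzb hcard
    by_cases hind : LinearIndependent ℝ (fun j : {j // z j ≠ 0} => (fun i : ι => A i j.1))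
    · exact ⟨z, hz, hzb, hind⟩
    obtain ⟨g, hsum, j₁, hj₁⟩ := Fintype.not_linearIndependent_iff.mp hind
    -- build a kernel vector supported on supp z with a positive entry
    obtain ⟨c, hAc, hsupp, j₂, hj₂⟩ :
        ∃ c : κ → ℝ, A *ᵥ c = 0 ∧ (∀ j, c j ≠ 0 → z j ≠ 0) ∧ ∃ j, 0 < c j := by
      set c : κ → ℝ := fun j => if h : z j ≠ 0 then g ⟨j, h⟩ else 0 with hcdef
      have hsupp : ∀ j, c j ≠ 0 → z j ≠ 0 := by
        intro j hj
        by_contra hzj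
        apply hj; simp [hcdef, hzj]
      have hAc : A *ᵥ c = 0 := by
        rw [mulVec_eq_subtype_sum A c (fun j => z j ≠ 0) hsupp]
        rw [← hsum]
        refine Finset.sum_congr (by congr!) fun j _ => ?_
        congr 1
        simp [hcdef, j.2]
      have hcj₁ : c j₁.1 ≠ 0 := by simpa [hcdef, j₁.2] using hj₁
      by_cases hex : ∃ j, 0 < c j
      · exact ⟨c, hAc, hsupp, hex⟩
      · push_neg at hex
        refine ⟨-c, by rw [Matrix.mulVec_neg, hAc, neg_zero], fun j hj => hsupp j (by simpa using hj), j₁.1, ?_⟩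
        have := lt_of_le_of_ne (hex j₁.1) hcj₁
        simpa using this
    set T : Finset κ := Finset.univ.filter (fun j => 0 < c j) with hTdef
    have hTne : T.Nonempty := ⟨j₂, by simp [hTdef, hj₂]⟩
    set t : ℝ := T.inf' hTne (fun j => z j / c j) with htdef
    obtain ⟨j₀, hj₀T, hj₀⟩ := Finset.exists_mem_eq_inf' hTne (fun j => z j / c j)
    have hcj₀ : 0 < c j₀ := by simpa [hTdef] using hj₀T
    have ht0 : 0 ≤ t := by
      rw [htdef, hj₀]
      exact div_nonneg (hz j₀) hcj₀.le
    set z' : κ → ℝ := z - t • c with hz'def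
    have hz'app : ∀ j, z' j = z j - t * c j := fun j => rfl
    have hz' : 0 ≤ z' := by
      intro j
      have hzj : (0:ℝ) ≤ z j := hz j
      show (0:ℝ) ≤ z' j
      rw [hz'app]
      by_cases hcj : 0 < c j
      · have hjT : j ∈ T := by simp [hTdef, hcj]
        have := Finset.inf'_le (fun j => z j / c j) hjT
        rw [← htdef] at this
        have := (le_div_iff₀ hcj).mp this
        linarith
      · have h1 : t * c j ≤ 0 := mul_nonpos_of_nonneg_of_nonpos ht0 (not_lt.mp hcj)
        have := hz j
        simpa using by linarith [hz j]
    have hz'b : A *ᵥ z' = b := by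
      rw [hz'def, Matrix.mulVec_sub, Matrix.mulVec_smul, hAc, hzb]
      simp
    have hsub : ∀ j, z' j ≠ 0 → z j ≠ 0 := by
      intro j hj
      by_contra hzj
      have hcj : c j = 0 := by
        by_contra hcj
        exact (hsupp j hcj) hzj
      apply hj
      rw [hz'app, hzj, hcj]; ring
    have hj₀z : z j₀ ≠ 0 := hsupp j₀ hcj₀.ne'
    have hj₀z' : z' j₀ = 0 := by
      rw [hz'app, htdef, hj₀, div_mul_cancel₀ _ hcj₀.ne']; ring
    have hss : (Finset.univ.filter fun j => z' j ≠ 0) ⊂ (Finset.univ.filter fun j => z j ≠ 0) := by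
      refine Finset.ssubset_iff_of_subset ?_ |>.mpr ?_
      · intro j hj
        simp only [Finset.mem_filter, Finset.mem_univ, true_and] at hj ⊢
        exact hsub j hj
      · exact ⟨j₀, by simp [hj₀z], by simp [hj₀z']⟩
    have := Finset.card_lt_card hss
    exact ih z' hz' hz'b (by omega)

open scoped Classical in
set_option maxHeartbeats 2000000 in
private lemma cone_isClosed {ι κ : Type*} [Fintype ι] [Fintype κ] (A : Matrix ι κ ℝ) :
    IsClosed {x : ι → ℝ | ∃ z : κ → ℝ, 0 ≤ z ∧ A *ᵥ z = x} := by
  have key : {x : ι → ℝ | ∃ z : κ → ℝ, 0 ≤ z ∧ A *ᵥ z = x} =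
      ⋃ (S : Finset κ)
        (_ : LinearIndependent ℝ (fun j : {j // j ∈ S} => (fun i : ι => A i j.1))),
        {x | ∃ z : κ → ℝ, 0 ≤ z ∧ (∀ j, z j ≠ 0 → j ∈ S) ∧ A *ᵥ z = x} := by
    ext x
    simp only [Set.mem_setOf_eq, Set.mem_iUnion]
    constructor
    · rintro ⟨z, hz, hzx⟩
      obtain ⟨z', hz', hz'x, hind⟩ := carath A x _ z hz hzx le_rfl
      refine ⟨Finset.univ.filter (fun j => z' j ≠ 0), ?_, z', hz', fun j hj => by simp [hj], hz'x⟩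
      exact hind.comp
        (fun j : {j // j ∈ Finset.univ.filter (fun j => z' j ≠ 0)} =>
          (⟨j.1, (Finset.mem_filter.mp j.2).2⟩ : {j // z' j ≠ 0}))
        (fun a b hab => by
          apply Subtype.ext
          have := congrArg Subtype.val hab
          simpa using this)
    · rintro ⟨S, _, z, hz, _, hzx⟩
      exact ⟨z, hz, hzx⟩
  rw [key]
  refine isClosed_iUnion_of_finite fun S => ?_
  by_cases hS : LinearIndependent ℝ (fun j : {j // j ∈ S} => (fun i : ι => A i j.1))
  · rw [Set.iUnion_eq_if, if_pos hS]
    -- the piece is the image of the orthant under an injective linear map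
    set e : ({j // j ∈ S} → ℝ) →ₗ[ℝ] (κ → ℝ) :=
      { toFun := fun u j => if h : j ∈ S then u ⟨j, h⟩ else 0
        map_add' := by intro a b; funext j; by_cases h : j ∈ S <;> simp [h]
        map_smul' := by intro r a; funext j; by_cases h : j ∈ S <;> simp [h] } with hedef
    have heapp : ∀ (u : {j // j ∈ S} → ℝ) (j : κ),
        e u j = if h : j ∈ S then u ⟨j, h⟩ else 0 := fun u j => rfl
    set φ : ({j // j ∈ S} → ℝ) →ₗ[ℝ] (ι → ℝ) := A.mulVecLin ∘ₗ e with hφdef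
    have hφapp : ∀ u, φ u = A *ᵥ (e u) := fun u => rfl
    have hesupp : ∀ u j, e u j ≠ 0 → j ∈ S := by
      intro u j hj
      by_contra h
      exact hj (by simp [heapp, h])
    have hφsum : ∀ u, φ u = ∑ j : {j // j ∈ S}, u j • (fun i => A i j.1) := by
      intro u
      rw [hφapp, mulVec_eq_subtype_sum A (e u) (fun j => j ∈ S) (hesupp u)]
      refine Finset.sum_congr (by congr!) fun j _ => ?_
      congr 1
      simp [heapp, j.2]
    have hφinj : LinearMap.ker φ = ⊥ := by
      rw [LinearMap.ker_eq_bot]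
      intro u u' huu
      by_contra hne
      have hd : u - u' ≠ 0 := sub_ne_zero.mpr hne
      have : φ (u - u') = 0 := by rw [map_sub, huu, sub_self]
      rw [hφsum] at this
      have hall := Fintype.linearIndependent_iff.mp hS (u - u') this
      exact hd (funext fun j => hall j)
    have himg : {x : ι → ℝ | ∃ z : κ → ℝ, 0 ≤ z ∧ (∀ j, z j ≠ 0 → j ∈ S) ∧ A *ᵥ z = x} =
        φ '' {u | 0 ≤ u} := by
      ext x
      constructor
      · rintro ⟨z, hz, hzS, hzx⟩
        refine ⟨fun j => z j.1, fun j => hz j.1, ?_⟩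
        rw [hφapp]
        have : e (fun j : {j // j ∈ S} => z j.1) = z := by
          funext j
          rw [heapp]
          by_cases h : j ∈ S
          · simp [h]
          · simp only [h, dif_neg, not_false_iff]
            by_contra hzj
            exact h (hzS j (Ne.symm hzj))
        rw [this, hzx]
      · rintro ⟨u, hu, rfl⟩
        refine ⟨e u, ?_, hesupp u, (hφapp u).symm⟩
        intro j
        show (0:ℝ) ≤ e u j
        rw [heapp]
        by_cases h : j ∈ S
        · simp only [h, dif_pos]; exact hu _
        · simp [h]
    rw [himg]
    have horth : IsClosed {u : {j // j ∈ S} → ℝ | 0 ≤ u} := by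
      have h2 : {u : {j // j ∈ S} → ℝ | 0 ≤ u} = ⋂ j, {u | 0 ≤ u j} := by
        ext u; simp [Pi.le_def]
      rw [h2]
      exact isClosed_iInter fun j => isClosed_le continuous_const (continuous_apply j)
    exact (LinearMap.isClosedEmbedding_of_injective hφinj).isClosedMap _ horth
  · rw [Set.iUnion_eq_if, if_neg hS]
    exact isClosed_empty

open scoped InnerProductSpace in
private theorem farkas_neg {ι κ : Type*} [Fintype ι] [Fintype κ] [DecidableEq κ]
    (A : Matrix ι κ ℝ) (b : ι → ℝ) (h : ¬ ∃ z : κ → ℝ, 0 ≤ z ∧ A *ᵥ z = b) :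
    ∃ y : ι → ℝ, (∀ j, 0 ≤ (Aᵀ *ᵥ y) j) ∧ b ⬝ᵥ y < 0 := by
  classical
  set C : Set (ι → ℝ) := {x | ∃ z : κ → ℝ, 0 ≤ z ∧ A *ᵥ z = x} with hCdef
  have hCclosed : IsClosed C := cone_isClosed A
  let K : ConvexCone ℝ (EuclideanSpace ℝ ι) :=
  { carrier := {x | WithLp.ofLp x ∈ C}
    smul_mem' := by
      rintro r hr x ⟨z, hz, hzx⟩
      exact ⟨r • z, smul_nonneg hr.le hz, by rw [Matrix.mulVec_smul, hzx, WithLp.ofLp_smul]⟩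
    add_mem' := by
      rintro x ⟨z, hz, hzx⟩ x' ⟨z', hz', hzx'⟩
      exact ⟨z + z', add_nonneg hz hz', by rw [Matrix.mulVec_add, hzx, hzx', WithLp.ofLp_add]⟩ }
  have hKC : (K : Set (EuclideanSpace ℝ ι)) = WithLp.ofLp ⁻¹' C := rfl
  have hne : (K : Set (EuclideanSpace ℝ ι)).Nonempty :=
    ⟨0, ⟨0, le_refl 0, Matrix.mulVec_zero A⟩⟩
  have hclosed : IsClosed (K : Set (EuclideanSpace ℝ ι)) := by
    rw [hKC]
    exact hCclosed.preimage (PiLp.continuous_ofLp 2 _)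
  have hbnot : (WithLp.toLp 2 b : EuclideanSpace ℝ ι) ∉ K := fun hb => h hb
  obtain ⟨P, hP⟩ : ∃ P : ProperCone ℝ (EuclideanSpace ℝ ι), (P : ConvexCone ℝ _) = K :=
    CanLift.prf K ⟨hne, hclosed⟩
  obtain ⟨y, hy', hyb⟩ :=
    P.hyperplane_separation' (x₀ := WithLp.toLp 2 b) (fun hb => hbnot (hP ▸ hb))
  have hy : ∀ x ∈ K, 0 ≤ inner ℝ x y := fun x hx => hy' x (by rw [← hP] at hx; exact hx)
  refine ⟨WithLp.ofLp y, ?_, ?_⟩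
  · intro j
    have hmem : (WithLp.toLp 2 (A *ᵥ Pi.single j 1) : EuclideanSpace ℝ ι) ∈ K := by
      have hps : (0 : κ → ℝ) ≤ Pi.single j 1 := by
        intro j'
        by_cases hjj : j' = j
        · subst hjj; simp
        · simp [Pi.single_apply, hjj]
      exact ⟨Pi.single j 1, hps, rfl⟩
    have h1 := hy _ hmem
    rw [PiLp.inner_apply] at h1
    simp only [RCLike.inner_apply, conj_trivial] at h1
    rw [Matrix.mulVec_single] at h1
    simpa [Matrix.mulVec, dotProduct, Matrix.transpose_apply, mul_comm] using h1
  · rw [PiLp.inner_apply] at hyb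
    simp only [RCLike.inner_apply, conj_trivial] at hyb
    simpa [dotProduct, mul_comm] using hyb

open scoped ENNReal


set_option maxHeartbeats 1000000 in
/-- Lemma `l:lambdaistar`. Let `μ*_i ∈ [0, +∞]` be the optimal
value of the linear program
`inf { qᵀy + βy₀ : D_iᵀy + q_i y₀ = −1, Fy ≤ y₀w, y ≥ 0, y₀ ≥ 0 }`
(`+∞` when infeasible). If `μ*_i > 0`, then there are `v ≥ 0`, `s ≥ 0` with
`(μ*_i)⁻¹ q + D_i + Fᵀv − s = 0` and `(μ*_i)⁻¹ β + q_i − wᵀv ≥ 0`, where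
`(+∞)⁻¹ = 0`. -/
theorem dual_certificate_of_pos_LP_value {n M k : ℕ} (hkn : k ≤ n)
    (D : Matrix (Fin n) (Fin n) ℝ) (hD : D.IsSymm)
    (hDz : ∀ i j : Fin n, k ≤ (i : ℕ) ∨ k ≤ (j : ℕ) → D i j = 0)
    (q : Fin n → ℝ) (hq : 0 ≤ q) (hqz : ∀ i : Fin n, k ≤ (i : ℕ) → q i = 0)
    (β : ℝ) (hβ : 0 ≤ β)
    (F : Matrix (Fin M) (Fin n) ℝ) (w : Fin M → ℝ)
    (i : Fin n) (hi : (i : ℕ) < k)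
    (mustar : ℝ≥0∞)
    (hmu : mustar = sInf {r : ℝ≥0∞ | ∃ y : Fin n → ℝ, ∃ y₀ : ℝ,
      (fun j => D j i) ⬝ᵥ y + q i * y₀ = -1 ∧
      (∀ j, (F *ᵥ y) j ≤ y₀ * w j) ∧ 0 ≤ y ∧ 0 ≤ y₀ ∧
      r = ENNReal.ofReal (q ⬝ᵥ y + β * y₀)})
    (hpos : 0 < mustar) :
    ∃ v : Fin M → ℝ, ∃ s : Fin n → ℝ, 0 ≤ v ∧ 0 ≤ s ∧
      (mustar⁻¹).toReal • q + (fun j => D j i) + Fᵀ *ᵥ v - s = 0 ∧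
      0 ≤ (mustar⁻¹).toReal * β + q i - w ⬝ᵥ v := by
  classical
  set ρ : ℝ := (mustar⁻¹).toReal with hρdef
  have hρ0 : 0 ≤ ρ := ENNReal.toReal_nonneg
  set cc : Fin n → ℝ := fun j => D j i with hccdef
  set A : Matrix (Sum (Fin n) Unit) (Sum (Fin M) (Sum (Fin n) Unit)) ℝ :=
    Matrix.of (fun r =>
      Sum.elim
        (fun j => Sum.elim (fun m => F m j)
          (Sum.elim (fun j' => if j = j' then (-1:ℝ) else 0) (fun _ => (0:ℝ))))
        (fun _ => Sum.elim (fun m => w m)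
          (Sum.elim (fun _ => (0:ℝ)) (fun _ => (1:ℝ))))
        r) with hAdef
  set bb : Sum (Fin n) Unit → ℝ :=
    Sum.elim (fun j => -(ρ * q j + cc j)) (fun _ => ρ * β + q i) with hbbdef
  by_cases hmem : ∃ z : Sum (Fin M) (Sum (Fin n) Unit) → ℝ, 0 ≤ z ∧ A *ᵥ z = bb
  · -- membership: read off the certificate
    obtain ⟨z, hz, hzb⟩ := hmem
    refine ⟨fun m => z (Sum.inl m), fun j => z (Sum.inr (Sum.inl j)), ?_, ?_, ?_, ?_⟩
    · intro m; exact hz (Sum.inl m)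
    · intro j; exact hz (Sum.inr (Sum.inl j))
    · funext j
      have ej := congrFun hzb (Sum.inl j)
      simp only [hAdef, hbbdef, Matrix.mulVec, dotProduct, Matrix.of_apply,
        Fintype.sum_sum_type, Sum.elim_inl, Sum.elim_inr, ite_mul, neg_mul, one_mul,
        zero_mul, Finset.sum_ite_eq, Finset.sum_ite_eq', Finset.mem_univ, if_true, Finset.sum_const_zero,
        add_zero, Fintype.univ_unit, Finset.sum_singleton] at ej
      have hFv : (Fᵀ *ᵥ (fun m => z (Sum.inl m))) j = ∑ m, F m j * z (Sum.inl m) := by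
        simp [Matrix.mulVec, dotProduct, Matrix.transpose_apply]
      simp only [Pi.add_apply, Pi.sub_apply, Pi.smul_apply, smul_eq_mul, Pi.zero_apply, hFv]
      linarith [ej]
    · have eu := congrFun hzb (Sum.inr ())
      simp only [hAdef, hbbdef, Matrix.mulVec, dotProduct, Matrix.of_apply,
        Fintype.sum_sum_type, Sum.elim_inl, Sum.elim_inr, ite_mul, neg_mul, one_mul,
        zero_mul, Finset.sum_ite_eq, Finset.sum_ite_eq', Finset.mem_univ, if_true, Finset.sum_const_zero,
        zero_add, Fintype.univ_unit, Finset.sum_singleton] at eu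
      have hwv : w ⬝ᵥ (fun m => z (Sum.inl m)) = ∑ m, w m * z (Sum.inl m) := rfl
      have ht : 0 ≤ z (Sum.inr (Sum.inr ())) := hz _
      rw [hwv]
      linarith [eu]
  · -- non-membership: Farkas yields a feasible point that beats the optimum
    exfalso
    obtain ⟨y, hAy, hby⟩ := farkas_neg A bb hmem
    set Y : Fin n → ℝ := fun j => -(y (Sum.inl j)) with hYdef
    set y₀ : ℝ := y (Sum.inr ()) with hy₀def
    have hY0 : ∀ j, 0 ≤ Y j := by
      intro j
      have h1 := hAy (Sum.inr (Sum.inl j))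
      simp only [hAdef, Matrix.mulVec, dotProduct, Matrix.transpose_apply,
        Matrix.of_apply, Fintype.sum_sum_type, Sum.elim_inl, Sum.elim_inr, ite_mul,
        neg_mul, one_mul, zero_mul, Finset.sum_ite_eq, Finset.sum_ite_eq', Finset.mem_univ, if_true,
        Finset.sum_const_zero, add_zero, zero_add, Fintype.univ_unit,
        Finset.sum_singleton] at h1
      simp only [hYdef]
      linarith [h1]
    have hy₀0 : 0 ≤ y₀ := by
      have h1 := hAy (Sum.inr (Sum.inr ()))
      simp only [hAdef, Matrix.mulVec, dotProduct, Matrix.transpose_apply,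
        Matrix.of_apply, Fintype.sum_sum_type, Sum.elim_inl, Sum.elim_inr, ite_mul,
        neg_mul, one_mul, zero_mul, Finset.sum_ite_eq, Finset.sum_ite_eq', Finset.mem_univ, if_true,
        Finset.sum_const_zero, add_zero, zero_add, Fintype.univ_unit,
        Finset.sum_singleton] at h1
      exact h1
    have hFY : ∀ m, (F *ᵥ Y) m ≤ y₀ * w m := by
      intro m
      have h1 := hAy (Sum.inl m)
      simp only [hAdef, Matrix.mulVec, dotProduct, Matrix.transpose_apply,
        Matrix.of_apply, Fintype.sum_sum_type, Sum.elim_inl, Sum.elim_inr, ite_mul,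
        neg_mul, one_mul, zero_mul, Finset.sum_ite_eq, Finset.sum_ite_eq', Finset.mem_univ, if_true,
        Finset.sum_const_zero, add_zero, zero_add, Fintype.univ_unit,
        Finset.sum_singleton] at h1
      have h2 : (F *ᵥ Y) m = -∑ j, F m j * y (Sum.inl j) := by
        simp [Matrix.mulVec, dotProduct, hYdef, mul_neg, ← Finset.sum_neg_distrib]
      rw [h2]
      linarith [h1]
    set P : ℝ := q ⬝ᵥ Y + β * y₀ with hPdef
    set E : ℝ := cc ⬝ᵥ Y + q i * y₀ with hEdef
    have hbbdot : bb ⬝ᵥ y = ρ * P + E := by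
      rw [hPdef, hEdef]
      simp only [dotProduct, hbbdef, Fintype.sum_sum_type, Sum.elim_inl,
        Sum.elim_inr, Fintype.univ_unit, Finset.sum_singleton]
      have h3 : ∀ j, -(ρ * q j + cc j) * y (Sum.inl j) = ρ * (q j * Y j) + cc j * Y j := by
        intro j; simp only [hYdef]; ring
      rw [Finset.sum_congr rfl fun j _ => h3 j, Finset.sum_add_distrib, ← Finset.mul_sum]
      simp only [hy₀def]
      ring
    have hPE : ρ * P + E < 0 := by rw [← hbbdot]; exact hby
    have hP0 : 0 ≤ P := by
      have h1 : 0 ≤ q ⬝ᵥ Y := Finset.sum_nonneg fun j _ => mul_nonneg (hq j) (hY0 j)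
      have h2 : 0 ≤ β * y₀ := mul_nonneg hβ hy₀0
      rw [hPdef]; linarith
    have hE : E < 0 := by nlinarith [mul_nonneg hρ0 hP0]
    set θ : ℝ := (-E)⁻¹ with hθdef
    have hθ : 0 < θ := by rw [hθdef]; exact inv_pos.mpr (by linarith)
    have hθE : θ * E = -1 := by
      rw [hθdef, inv_mul_eq_div, div_eq_iff (by linarith : -E ≠ 0)]
      ring
    have hfeas1 : cc ⬝ᵥ (θ • Y) + q i * (θ * y₀) = -1 := by
      rw [dotProduct_smul]
      simp only [smul_eq_mul]
      rw [← hθE, hEdef]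
      ring
    have hfeas2 : ∀ m, (F *ᵥ (θ • Y)) m ≤ (θ * y₀) * w m := by
      intro m
      rw [Matrix.mulVec_smul]
      have := mul_le_mul_of_nonneg_left (hFY m) hθ.le
      simpa [mul_assoc, mul_comm, mul_left_comm] using this
    have hfeas3 : (0 : Fin n → ℝ) ≤ θ • Y := by
      intro j
      have : (0:ℝ) ≤ θ * Y j := mul_nonneg hθ.le (hY0 j)
      simpa using this
    have hfeas4 : (0:ℝ) ≤ θ * y₀ := mul_nonneg hθ.le hy₀0
    have hval : q ⬝ᵥ (θ • Y) + β * (θ * y₀) = θ * P := by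
      rw [dotProduct_smul]
      simp only [smul_eq_mul]
      rw [hPdef]; ring
    have hle : mustar ≤ ENNReal.ofReal (θ * P) := by
      rw [hmu]
      refine sInf_le ?_
      exact ⟨θ • Y, θ * y₀, hfeas1, hfeas2, hfeas3, hfeas4, by rw [hval]⟩
    have hθP0 : (0:ℝ) ≤ θ * P := mul_nonneg hθ.le hP0
    rcases eq_or_ne mustar ⊤ with htop | htop
    · rw [htop, top_le_iff] at hle
      exact ENNReal.ofReal_ne_top hle
    · have hμpos : 0 < mustar.toReal := ENNReal.toReal_pos hpos.ne' htop
      set μ : ℝ := mustar.toReal with hμdef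
      have hρeq : ρ = μ⁻¹ := by rw [hρdef, ENNReal.toReal_inv, hμdef]
      have hmle : μ ≤ θ * P := by
        have h1 := ENNReal.toReal_mono ENNReal.ofReal_ne_top hle
        rwa [ENNReal.toReal_ofReal hθP0] at h1
      have hEθ : -E = θ⁻¹ := by rw [hθdef, inv_inv]
      have h4 : μ⁻¹ * P < θ⁻¹ := by rw [← hEθ]; rw [hρeq] at hPE; linarith
      have h5 : P < μ * θ⁻¹ := by
        calc P = μ * (μ⁻¹ * P) := by field_simp
        _ < μ * θ⁻¹ := mul_lt_mul_of_pos_left h4 hμpos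
      have h6 : θ * P < θ * (μ * θ⁻¹) := mul_lt_mul_of_pos_left h5 hθ
      have h7 : θ * (μ * θ⁻¹) = μ := by field_simp
      rw [h7] at h6
      exact lt_irrefl _ (lt_of_le_of_lt hmle h6)
end

section
/- Let k ≤ n, let D be a symmetric n×n real matrix with D_{ij} = 0 whenever i > k or j > k, let q ∈ ℝⁿ with q ≥ 0 and q_i = 0 for i > k, let β ≥ 0, F ∈ ℝ^{M×n}, w ∈ ℝ^M, and let ȳ ∈ ℝⁿ satisfy ȳ_i = 0 for all i ∈ {1,…,k}. For i ∈ {1,…,k} define μ*_i := inf{ qᵀy + β y₀ : D_iᵀ y + q_i y₀ = −1, F y ≤ y₀ w, y ≥ 0, y₀ ≥ 0 } ∈ [0, +∞] (D_i the i-th column of D), and assume μ*_i > 0 for every i ∈ {1,…,k}. Define θ ∈ ℝⁿ by θ_i = (μ*_i)^{-1} for i ≤ k (with (+∞)^{-1} = 0) and θ_i = 0 for i > k. Then for every y ∈ ℝⁿ with y ≥ 0, F y ≤ w, and θᵀ(y − ȳ) ≤ 1, one has yᵀ D y + 2 qᵀ y + β ≥ 0. -/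
open Matrix
open scoped ENNReal

/-- Proposition `prop:Konno`, validity of the Konno-type cut in
transformed coordinates. Suppose `μ*_i > 0` for all `i ≤ k`, and let
`θ_i = (μ*_i)⁻¹` for `i ≤ k` (`(+∞)⁻¹ = 0`) and `θ_i = 0` for `i > k`. Then the
quadratic `yᵀDy + 2qᵀy + β` is nonnegative over the region
`{y ≥ 0, Fy ≤ w, θᵀ(y − ȳ) ≤ 1}`. -/
theorem konno_cut_valid {n M k : ℕ} (hkn : k ≤ n)
    (D : Matrix (Fin n) (Fin n) ℝ) (hD : D.IsSymm)
    (hDz : ∀ i j : Fin n, k ≤ (i : ℕ) ∨ k ≤ (j : ℕ) → D i j = 0)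
    (q : Fin n → ℝ) (hq : 0 ≤ q) (hqz : ∀ i : Fin n, k ≤ (i : ℕ) → q i = 0)
    (β : ℝ) (hβ : 0 ≤ β)
    (F : Matrix (Fin M) (Fin n) ℝ) (w : Fin M → ℝ)
    (ybar : Fin n → ℝ) (hybar : ∀ i : Fin n, (i : ℕ) < k → ybar i = 0)
    (mustar : Fin n → ℝ≥0∞)
    (hmu : ∀ i : Fin n, mustar i = sInf {r : ℝ≥0∞ | ∃ y : Fin n → ℝ, ∃ y₀ : ℝ,
      (fun j => D j i) ⬝ᵥ y + q i * y₀ = -1 ∧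
      (∀ j, (F *ᵥ y) j ≤ y₀ * w j) ∧ 0 ≤ y ∧ 0 ≤ y₀ ∧
      r = ENNReal.ofReal (q ⬝ᵥ y + β * y₀)})
    (hpos : ∀ i : Fin n, (i : ℕ) < k → 0 < mustar i)
    (θ : Fin n → ℝ)
    (hθ : ∀ i : Fin n, θ i = if (i : ℕ) < k then ((mustar i)⁻¹).toReal else 0) :
    ∀ y : Fin n → ℝ, 0 ≤ y → F *ᵥ y ≤ w → θ ⬝ᵥ (y - ybar) ≤ 1 →
      0 ≤ y ⬝ᵥ (D *ᵥ y) + 2 * (q ⬝ᵥ y) + β := by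

  intro y hy hFy hcut
  set s := q ⬝ᵥ y + β with hs
  have hqy : 0 ≤ q ⬝ᵥ y := Finset.sum_nonneg fun i _ => mul_nonneg (hq i) (hy i)
  have hsnn : 0 ≤ s := by rw [hs]; linarith
  have hθnn : ∀ i, 0 ≤ θ i := by
    intro i; rw [hθ i]; split
    · exact ENNReal.toReal_nonneg
    · exact le_refl 0
  have hDyi : ∀ i : Fin n, (fun j => D j i) ⬝ᵥ y = (D *ᵥ y) i := by
    intro i
    simp only [dotProduct, mulVec, dotProduct]
    exact Finset.sum_congr rfl fun j _ => by rw [hD.apply i j]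
  have key : ∀ i : Fin n, -(θ i * y i * s) ≤ y i * ((D *ᵥ y) i + q i) := by
    intro i
    by_cases hik : (i : ℕ) < k
    · by_cases hc : 0 ≤ (D *ᵥ y) i + q i
      · have h1 : 0 ≤ y i * ((D *ᵥ y) i + q i) := mul_nonneg (hy i) hc
        have h2 : 0 ≤ θ i * y i * s :=
          mul_nonneg (mul_nonneg (hθnn i) (hy i)) hsnn
        linarith
      · push_neg at hc
        set c := -((D *ᵥ y) i + q i) with hcdef
        have hcpos : 0 < c := by rw [hcdef]; linarith
        have hcinv : 0 ≤ c⁻¹ := inv_nonneg.2 hcpos.le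
        have hmle : mustar i ≤ ENNReal.ofReal (c⁻¹ * s) := by
          rw [hmu i]
          refine sInf_le ⟨c⁻¹ • y, c⁻¹, ?_, ?_, ?_, hcinv, ?_⟩
          · have h1 : (fun j => D j i) ⬝ᵥ (c⁻¹ • y) = c⁻¹ * ((D *ᵥ y) i) := by
              rw [dotProduct_smul, hDyi i]; rfl
            rw [h1]
            have : (D *ᵥ y) i + q i = -c := by rw [hcdef]; ring
            field_simp
            nlinarith [this]
          · intro j
            have h1 : (F *ᵥ (c⁻¹ • y)) j = c⁻¹ * (F *ᵥ y) j := by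
              rw [mulVec_smul]; rfl
            rw [h1]
            exact mul_le_mul_of_nonneg_left (hFy j) hcinv
          · intro j
            exact mul_nonneg hcinv (hy j)
          · congr 1
            have h1 : q ⬝ᵥ (c⁻¹ • y) = c⁻¹ * (q ⬝ᵥ y) := by
              rw [dotProduct_smul]; rfl
            rw [h1, hs]; ring
        have hne : mustar i ≠ ⊤ := ne_top_of_le_ne_top ENNReal.ofReal_ne_top hmle
        set t := (mustar i).toReal with ht
        have htpos : 0 < t := ENNReal.toReal_pos (hpos i hik).ne' hne
        have hle' : t ≤ c⁻¹ * s := by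
          have := ENNReal.toReal_mono ENNReal.ofReal_ne_top hmle
          rwa [ENNReal.toReal_ofReal (mul_nonneg hcinv hsnn)] at this
        have hθi : θ i = t⁻¹ := by
          rw [hθ i, if_pos hik, ENNReal.toReal_inv]
        have hct : c * t ≤ s := by
          have h2 := mul_le_mul_of_nonneg_left hle' hcpos.le
          have h3 : c * (c⁻¹ * s) = s := by field_simp
          exact le_of_le_of_eq h2 h3
        have hcle : c ≤ t⁻¹ * s := by
          rw [le_inv_mul_iff₀ htpos]; linarith [hct]
        have h4 := mul_le_mul_of_nonneg_left hcle (hy i)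
        have h5 : (D *ᵥ y) i + q i = -c := by rw [hcdef]; ring
        rw [h5, hθi]
        nlinarith [h4]
    · have hik' : k ≤ (i : ℕ) := le_of_not_gt hik
      have hθ0 : θ i = 0 := by rw [hθ i, if_neg hik]
      have hq0 : q i = 0 := hqz i hik'
      have hD0 : (D *ᵥ y) i = 0 := by
        simp only [mulVec, dotProduct]
        exact Finset.sum_eq_zero fun j _ => by rw [hDz i j (Or.inl hik')]; ring
      rw [hθ0, hq0, hD0]; simp
  have hsum : ∑ i, -(θ i * y i * s) ≤ ∑ i, y i * ((D *ᵥ y) i + q i) :=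
    Finset.sum_le_sum fun i _ => key i
  have hL : ∑ i, -(θ i * y i * s) = -((θ ⬝ᵥ y) * s) := by
    rw [dotProduct, Finset.sum_mul, ← Finset.sum_neg_distrib]
  have hR : ∑ i, y i * ((D *ᵥ y) i + q i) = y ⬝ᵥ (D *ᵥ y) + q ⬝ᵥ y := by
    rw [dotProduct, dotProduct, ← Finset.sum_add_distrib]
    exact Finset.sum_congr rfl fun i _ => by ring
  have hθy : θ ⬝ᵥ y ≤ 1 := by
    have hzero : θ ⬝ᵥ ybar = 0 := Finset.sum_eq_zero fun i _ => by
      by_cases hik : (i:ℕ) < k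
      · rw [hybar i hik]; ring
      · rw [hθ i, if_neg hik]; ring
    have hsub : θ ⬝ᵥ (y - ybar) = θ ⬝ᵥ y - θ ⬝ᵥ ybar := dotProduct_sub θ y ybar
    rw [hsub, hzero] at hcut; linarith
  have hfin : 0 ≤ (1 - θ ⬝ᵥ y) * s := mul_nonneg (by linarith) hsnn
  rw [hL, hR] at hsum
  nlinarith [hsum, hfin]
end

section
/- Let k ≤ n, let D be a symmetric n×n real matrix with D_{ij} = 0 whenever i > k or j > k, let q ∈ ℝⁿ with q ≥ 0 and q_i = 0 for i > k, let β ≥ 0, F ∈ ℝ^{M×n}, w ∈ ℝ^M. For i ∈ {1,…,k} define μ*_i := inf{ qᵀy + β y₀ : D_iᵀ y + q_i y₀ = −1, F y ≤ y₀ w, y ≥ 0, y₀ ≥ 0 } ∈ [0, +∞], and assume μ*_i > 0 for every i ∈ {1,…,k}. Define θ ∈ ℝⁿ by θ_i = (μ*_i)^{-1} for i ≤ k (with (+∞)^{-1} = 0) and θ_i = 0 for i > k. Then there exist entrywise nonnegative Λ ∈ ℝ^{M×n}, L ∈ ℝ^{n×n} and ℓ ∈ ℝⁿ, ℓ ≥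 0, such that [D, q; qᵀ, β] = ½ Gᵀ [L + Lᵀ, Λᵀ, ℓ; Λ, 0, 0; ℓᵀ, 0ᵀ, 0] G + ½ (q; β)(−θᵀ, 1) + ½ (−θ; 1)(qᵀ, β), where G := [Iₙ, 0; −F, w; 0ᵀ, 1] ∈ ℝ^{(n+M+1)×(n+1)}. -/
open Matrix
open scoped ENNReal

/-- The `(n+M+1) × (n+1)` block matrix `G = [Iₙ, 0; −F, w; 0ᵀ, 1]`. -/
noncomputable def Gmat {n M : ℕ} (F : Matrix (Fin M) (Fin n) ℝ) (w : Fin M → ℝ) :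
    Matrix ((Fin n ⊕ Fin M) ⊕ Unit) (Fin n ⊕ Unit) ℝ :=
  Matrix.of fun i j =>
    match i, j with
    | Sum.inl (Sum.inl i), Sum.inl j => if i = j then 1 else 0
    | Sum.inl (Sum.inl _), Sum.inr _ => 0
    | Sum.inl (Sum.inr i), Sum.inl j => -F i j
    | Sum.inl (Sum.inr i), Sum.inr _ => w i
    | Sum.inr _, Sum.inl _ => 0
    | Sum.inr _, Sum.inr _ => 1

/-- The `(n+M+1) × (n+M+1)` block matrix `[L+Lᵀ, Λᵀ, ℓ; Λ, 0, 0; ℓᵀ, 0ᵀ, 0]`. -/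
noncomputable def midMat {n M : ℕ} (L : Matrix (Fin n) (Fin n) ℝ)
    (Λ : Matrix (Fin M) (Fin n) ℝ) (ℓ : Fin n → ℝ) :
    Matrix ((Fin n ⊕ Fin M) ⊕ Unit) ((Fin n ⊕ Fin M) ⊕ Unit) ℝ :=
  Matrix.of fun i j =>
    match i, j with
    | Sum.inl (Sum.inl i), Sum.inl (Sum.inl j) => L i j + L j i
    | Sum.inl (Sum.inl i), Sum.inl (Sum.inr j) => Λ j i
    | Sum.inl (Sum.inl i), Sum.inr _ => ℓ i
    | Sum.inl (Sum.inr i), Sum.inl (Sum.inl j) => Λ i j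
    | Sum.inl (Sum.inr _), Sum.inl (Sum.inr _) => 0
    | Sum.inl (Sum.inr _), Sum.inr _ => 0
    | Sum.inr _, Sum.inl (Sum.inl j) => ℓ j
    | Sum.inr _, Sum.inl (Sum.inr _) => 0
    | Sum.inr _, Sum.inr _ => 0

/-- The `(n+1) × (n+1)` symmetric matrix `[D, q; qᵀ, β]`. -/
noncomputable def DQmat {n : ℕ} (D : Matrix (Fin n) (Fin n) ℝ) (q : Fin n → ℝ)
    (β : ℝ) : Matrix (Fin n ⊕ Unit) (Fin n ⊕ Unit) ℝ :=
  Matrix.of fun i j =>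
    match i, j with
    | Sum.inl i, Sum.inl j => D i j
    | Sum.inl i, Sum.inr _ => q i
    | Sum.inr _, Sum.inl j => q j
    | Sum.inr _, Sum.inr _ => β

lemma cone_carath {ι E : Type*} [Fintype ι] [DecidableEq ι] [AddCommGroup E] [Module ℝ E]
    (v : ι → E) (s : Finset ι) :
    ∀ c : ι → ℝ, (∀ i ∈ s, 0 ≤ c i) →
    ∃ (t : Finset ι) (d : ι → ℝ), t ⊆ s ∧ (∀ i ∈ t, 0 ≤ d i) ∧
      ∑ i ∈ t, d i • v i = ∑ i ∈ s, c i • v i ∧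
      LinearIndependent ℝ (fun i : t => v (i : ι)) := by
  classical
  induction s using Finset.strongInduction with
  | _ s ih =>
    intro c hc
    by_cases hli : LinearIndependent ℝ (fun i : s => v (i : ι))
    · exact ⟨s, c, subset_rfl, hc, rfl, hli⟩
    obtain ⟨g, hgsum, i₁, hi₁⟩ := Fintype.not_linearIndependent_iff.mp hli
    set ε : ℝ := if 0 < g i₁ then 1 else -1 with hε
    set g₂ : s → ℝ := fun i => ε * g i with hg₂
    have hg₂sum : ∑ i : s, g₂ i • v (i : ι) = 0 := by
      simp only [hg₂, mul_smul, ← Finset.smul_sum, hgsum, smul_zero]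
    have hg₂pos : 0 < g₂ i₁ := by
      rcases lt_or_gt_of_ne hi₁ with h | h
      · have : ε = -1 := if_neg (not_lt.mpr h.le)
        rw [hg₂]; simp only [this]; nlinarith
      · have : ε = 1 := if_pos h
        rw [hg₂]; simp only [this]; nlinarith
    set g' : ι → ℝ := fun i => if hi : i ∈ s then g₂ ⟨i, hi⟩ else 0 with hg'
    have hg'sum : ∑ i ∈ s, g' i • v i = 0 := by
      rw [← Finset.sum_attach s (fun i => g' i • v i), ← hg₂sum]
      refine Finset.sum_congr rfl fun i _ => ?_
      simp only [hg', dif_pos i.2]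
    have hi₁'pos : 0 < g' (i₁ : ι) := by simp only [hg', dif_pos i₁.2]; exact hg₂pos
    set T : Finset ι := s.filter (fun i => 0 < g' i) with hT
    have hTne : T.Nonempty := ⟨i₁, Finset.mem_filter.mpr ⟨i₁.2, hi₁'pos⟩⟩
    obtain ⟨i₀, hi₀T, hi₀min⟩ := T.exists_min_image (fun i => c i / g' i) hTne
    have hi₀s : i₀ ∈ s := (Finset.mem_filter.mp hi₀T).1
    have hi₀pos : 0 < g' i₀ := (Finset.mem_filter.mp hi₀T).2
    set t0 : ℝ := c i₀ / g' i₀ with ht0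
    have ht0nn : 0 ≤ t0 := div_nonneg (hc i₀ hi₀s) hi₀pos.le
    set c' : ι → ℝ := fun i => c i - t0 * g' i with hc'
    have hc'nn : ∀ i ∈ s, 0 ≤ c' i := by
      intro i hi
      by_cases hgi : 0 < g' i
      · have h1 := hi₀min i (Finset.mem_filter.mpr ⟨hi, hgi⟩)
        have h2 : t0 * g' i ≤ c i := by rw [← le_div_iff₀ hgi]; exact h1
        simpa [hc'] using sub_nonneg.mpr h2
      · push_neg at hgi
        have h2 : t0 * g' i ≤ 0 := mul_nonpos_of_nonneg_of_nonpos ht0nn hgi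
        simpa [hc'] using sub_nonneg.mpr (h2.trans (hc i hi))
    have hc'i₀ : c' i₀ = 0 := by
      simp only [hc', ht0]
      field_simp
      ring
    have hsum : ∑ i ∈ s.erase i₀, c' i • v i = ∑ i ∈ s, c i • v i := by
      rw [Finset.sum_erase _ (by rw [hc'i₀, zero_smul])]
      simp only [hc', sub_smul, Finset.sum_sub_distrib, mul_smul, ← Finset.smul_sum, hg'sum,
        smul_zero, sub_zero]
    obtain ⟨t, d, hts, hd, hdsum, hlit⟩ := ih (s.erase i₀) (Finset.erase_ssubset hi₀s) c'
      (fun i hi => hc'nn i (Finset.mem_of_mem_erase hi))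
    exact ⟨t, d, hts.trans (Finset.erase_subset _ _), hd, by rw [hdsum, hsum], hlit⟩

lemma isClosed_coneSet {ι R : Type*} [Fintype ι] [DecidableEq ι] [Fintype R]
    (v : ι → EuclideanSpace ℝ R) :
    IsClosed {x : EuclideanSpace ℝ R | ∃ c : ι → ℝ, (∀ i, 0 ≤ c i) ∧ x = ∑ i, c i • v i} := by
  classical
  have hset : {x : EuclideanSpace ℝ R | ∃ c : ι → ℝ, (∀ i, 0 ≤ c i) ∧ x = ∑ i, c i • v i} =
      ⋃ t ∈ {t : Finset ι | LinearIndependent ℝ (fun i : t => v (i : ι))},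
        {x : EuclideanSpace ℝ R | ∃ d : {i // i ∈ t} → ℝ, (∀ i, 0 ≤ d i) ∧
          x = ∑ i : {i // i ∈ t}, d i • v (i : ι)} := by
    ext x
    simp only [Set.mem_setOf_eq, Set.mem_iUnion]
    constructor
    · rintro ⟨c, hc, rfl⟩
      obtain ⟨t, d, -, hd, hsum, hli⟩ := cone_carath v Finset.univ c (fun i _ => hc i)
      refine ⟨t, hli, fun i => d (i : ι), fun i => hd i i.2, ?_⟩
      rw [← hsum, ← Finset.sum_attach t (fun i => d i • v i)]
      rfl
    · rintro ⟨t, hli, d, hd, rfl⟩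
      refine ⟨fun i => if hi : i ∈ t then d ⟨i, hi⟩ else 0, fun i => ?_, ?_⟩
      · by_cases hi : i ∈ t
        · simp only [dif_pos hi]; exact hd _
        · simp only [dif_neg hi]; exact le_refl 0
      · rw [← Finset.sum_subset (Finset.subset_univ t)
          (fun i _ hi => by simp only [dif_neg hi, zero_smul])]
        rw [← Finset.sum_attach t
          (fun i => (if hi : i ∈ t then d ⟨i, hi⟩ else 0) • v i)]
        exact (Finset.sum_congr rfl fun i _ => by rw [dif_pos i.2]).symm
  rw [hset]
  refine Set.Finite.isClosed_biUnion (Set.toFinite _) ?_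
  rintro t hli
  have hker : LinearMap.ker (Fintype.linearCombination ℝ (fun i : {i // i ∈ t} => v (i : ι))) = ⊥ := by
    rw [LinearMap.ker_eq_bot']
    intro m hm
    rw [Fintype.linearCombination_apply] at hm
    exact funext (Fintype.linearIndependent_iff.mp hli m hm)
  have hemb := LinearMap.isClosedEmbedding_of_injective hker
  have himg : {x : EuclideanSpace ℝ R | ∃ d : {i // i ∈ t} → ℝ, (∀ i, 0 ≤ d i) ∧
      x = ∑ i : {i // i ∈ t}, d i • v (i : ι)} =
      (Fintype.linearCombination ℝ (fun i : {i // i ∈ t} => v (i : ι))) ''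
        {d : {i // i ∈ t} → ℝ | ∀ i, 0 ≤ d i} := by
    ext x
    simp only [Set.mem_setOf_eq, Set.mem_image, Fintype.linearCombination_apply]
    exact ⟨fun ⟨d, hd, hx⟩ => ⟨d, hd, hx.symm⟩, fun ⟨d, hd, hx⟩ => ⟨d, hd, hx.symm⟩⟩
  rw [himg]
  refine hemb.isClosedMap _ ?_
  have : {d : {i // i ∈ t} → ℝ | ∀ i, 0 ≤ d i} = ⋂ i, {d | 0 ≤ d i} := by
    ext d; simp [Set.mem_iInter]
  rw [this]
  exact isClosed_iInter fun i => isClosed_le continuous_const (continuous_apply i)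

lemma farkas {ι κ : Type*} [Fintype ι] [Fintype κ] [DecidableEq ι] [DecidableEq κ]
    (A : ι → κ → ℝ) (b : ι → ℝ)
    (h : ¬ ∃ x : κ → ℝ, (∀ j, 0 ≤ x j) ∧ ∀ r, b r ≤ ∑ j, A r j * x j) :
    ∃ u : ι → ℝ, (∀ r, 0 ≤ u r) ∧ (∀ j, ∑ r, u r * A r j ≤ 0) ∧ 0 < ∑ r, b r * u r := by
  classical
  set E := EuclideanSpace ℝ ι
  set v : κ ⊕ ι → E := Sum.elim (fun j => (WithLp.toLp 2 (fun r => A r j) : E))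
    (fun r₀ => (WithLp.toLp 2 (fun r => if r = r₀ then (-1 : ℝ) else 0) : E)) with hv
  set C : Set E := {x | ∃ c : κ ⊕ ι → ℝ, (∀ i, 0 ≤ c i) ∧ x = ∑ i, c i • v i} with hC
  set K : ConvexCone ℝ E :=
    { carrier := C
      smul_mem' := by
        rintro a ha x ⟨c, hc, rfl⟩
        exact ⟨fun i => a * c i, fun i => mul_nonneg ha.le (hc i), by
          rw [Finset.smul_sum]; exact Finset.sum_congr rfl fun i _ => (mul_smul a (c i) (v i)).symm⟩
      add_mem' := by
        rintro x ⟨c, hc, rfl⟩ y ⟨c', hc', rfl⟩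
        exact ⟨fun i => c i + c' i, fun i => add_nonneg (hc i) (hc' i), by
          rw [← Finset.sum_add_distrib]
          exact Finset.sum_congr rfl fun i _ => (add_smul _ _ _).symm⟩ } with hK
  have hgen : ∀ i, v i ∈ C := by
    intro i
    refine ⟨fun i' => if i' = i then 1 else 0, fun i' => by positivity, ?_⟩
    simp [ite_smul]
  have hne : (K : Set E).Nonempty := ⟨0, ⟨0, fun i => le_refl 0, by simp⟩⟩
  have hcl : IsClosed (K : Set E) := isClosed_coneSet v
  have hbmem : (WithLp.toLp 2 b : E) ∉ K := by
    intro hb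
    obtain ⟨c, hc, hbc⟩ := hb
    refine h ⟨fun j => c (Sum.inl j), fun j => hc _, fun r => ?_⟩
    have hcr : b r = (∑ i, c i • v i) r := congrArg (fun x : E => x r) hbc
    have hsum : (∑ i, c i • v i) r = ∑ i, c i * v i r := by
      show (WithLp.ofLp (∑ i, c i • v i)) r = _
      rw [WithLp.ofLp_sum, Finset.sum_apply]; rfl
    rw [hsum, Fintype.sum_sum_type] at hcr
    simp only [hv, Sum.elim_inl, Sum.elim_inr, PiLp.toLp_apply] at hcr
    simp only [mul_ite, mul_neg_one, mul_zero, Finset.sum_ite_eq, Finset.mem_univ,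
      if_true] at hcr
    have hnn : 0 ≤ c (Sum.inr r) := hc _
    calc b r = ∑ j, c (Sum.inl j) * A r j - c (Sum.inr r) := by rw [hcr]; ring
    _ ≤ ∑ j, c (Sum.inl j) * A r j := by linarith
    _ = ∑ j, A r j * c (Sum.inl j) := Finset.sum_congr rfl fun j _ => mul_comm _ _
  obtain ⟨y, hy1, hy2⟩ := ProperCone.hyperplane_separation' (x₀ := WithLp.toLp 2 b)
    { toSubmodule :=
        { carrier := C
          add_mem' := fun ha hb => K.add_mem' ha hb
          zero_mem' := ⟨0, fun i => le_refl 0, by simp⟩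
          smul_mem' := by
            rintro a x ⟨c, hc, rfl⟩
            exact ⟨fun i => (a : ℝ) * c i, fun i => mul_nonneg a.2 (hc i), by
              rw [Finset.smul_sum]
              exact Finset.sum_congr rfl fun i _ => (mul_smul (a : ℝ) (c i) (v i)).symm⟩ }
      isClosed' := hcl } hbmem
  refine ⟨fun r => -y r, ?_, ?_, ?_⟩
  · intro r
    have h1 := hy1 _ (hgen (Sum.inr r))
    rw [PiLp.inner_apply] at h1
    simp only [hv, Sum.elim_inr, PiLp.toLp_apply, RCLike.inner_apply, conj_trivial, ite_mul, neg_one_mul,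
      zero_mul, Finset.sum_ite_eq, Finset.sum_ite_eq', Finset.mem_univ, if_true] at h1
    simpa using h1
  · intro j
    have h1 := hy1 _ (hgen (Sum.inl j))
    rw [PiLp.inner_apply] at h1
    simp only [hv, Sum.elim_inl, PiLp.toLp_apply, RCLike.inner_apply, conj_trivial] at h1
    have h2 : ∑ r, -y r * A r j = -∑ r, y r * A r j := by
      rw [← Finset.sum_neg_distrib]; exact Finset.sum_congr rfl fun r _ => by ring
    show ∑ r, -y r * A r j ≤ 0
    rw [h2]; linarith
  · rw [PiLp.inner_apply] at hy2
    simp only [PiLp.toLp_apply, RCLike.inner_apply, conj_trivial] at hy2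
    have h2 : ∑ r, b r * -y r = -∑ r, y r * b r := by
      rw [← Finset.sum_neg_distrib]; exact Finset.sum_congr rfl fun r _ => by ring
    show 0 < ∑ r, b r * -y r
    rw [h2]; linarith

lemma assemble {n M : ℕ} (D : Matrix (Fin n) (Fin n) ℝ) (hD : D.IsSymm)
    (q θ : Fin n → ℝ) (β : ℝ)
    (F : Matrix (Fin M) (Fin n) ℝ) (w : Fin M → ℝ) (Λ : Matrix (Fin M) (Fin n) ℝ) :
    DQmat D q β =
      (1 / 2 : ℝ) • ((Gmat F w)ᵀ *
        midMat (Matrix.of fun a b => D a b + θ b * q a + ∑ m, F m a * Λ m b) Λ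
          (fun i => q i + β * θ i - ∑ m, w m * Λ m i) * Gmat F w) +
      (1 / 2 : ℝ) • (vecMulVec (Sum.elim q fun _ => β) (Sum.elim (-θ) fun _ => 1)) +
      (1 / 2 : ℝ) • (vecMulVec (Sum.elim (-θ) fun _ => 1) (Sum.elim q fun _ => β)) := by
  have hDs : ∀ a b, D b a = D a b := fun a b => hD.apply a b
  ext i j
  rcases i with i | i <;> rcases j with j | j <;>
    simp only [DQmat, Gmat, midMat, Matrix.add_apply, Matrix.smul_apply, Matrix.mul_apply,
      Matrix.transpose_apply, Matrix.of_apply, vecMulVec_apply, Sum.elim_inl, Sum.elim_inr,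
      Pi.neg_apply, Fintype.sum_sum_type, Finset.univ_unique, Finset.sum_singleton,
      smul_eq_mul, mul_ite, ite_mul, mul_zero, zero_mul, mul_one, one_mul,
      Finset.sum_ite_eq, Finset.sum_ite_eq', Finset.mem_univ, if_true,
      mul_add, add_mul, mul_sub, sub_mul, mul_neg, neg_mul,
      Finset.sum_add_distrib, Finset.sum_sub_distrib, Finset.sum_neg_distrib,
      Finset.sum_const_zero]
  · have hXY : ∑ x : Fin M, Λ x i * F x j = ∑ x : Fin M, F x j * Λ x i :=
      Finset.sum_congr rfl fun x _ => mul_comm _ _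
    linear_combination (-1/2 : ℝ) * hDs i j + (1/2 : ℝ) * hXY
  · have hW : ∑ x : Fin M, Λ x i * w x = ∑ x : Fin M, w x * Λ x i :=
      Finset.sum_congr rfl fun x _ => mul_comm _ _
    rw [hW]; ring
  · ring
  · ring

/-- Proposition `prop:LP`. With `μ*_i > 0` for all `i ≤ k` and
the Konno cut `θ` defined by `θ_i = (μ*_i)⁻¹` for `i ≤ k` and `θ_i = 0` otherwise,
there exist entrywise nonnegative `Λ`, `L` and `ℓ ≥ 0` such that
`[D, q; qᵀ, β] = ½ Gᵀ [L+Lᵀ, Λᵀ, ℓ; Λ, 0, 0; ℓᵀ, 0ᵀ, 0] G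
 + ½ (q; β)(−θᵀ, 1) + ½ (−θ; 1)(qᵀ, β)`. -/
theorem konno_cut_certificate {n M k : ℕ} (hkn : k ≤ n)
    (D : Matrix (Fin n) (Fin n) ℝ) (hD : D.IsSymm)
    (hDz : ∀ i j : Fin n, k ≤ (i : ℕ) ∨ k ≤ (j : ℕ) → D i j = 0)
    (q : Fin n → ℝ) (hq : 0 ≤ q) (hqz : ∀ i : Fin n, k ≤ (i : ℕ) → q i = 0)
    (β : ℝ) (hβ : 0 ≤ β)
    (F : Matrix (Fin M) (Fin n) ℝ) (w : Fin M → ℝ)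
    (mustar : Fin n → ℝ≥0∞)
    (hmu : ∀ i : Fin n, mustar i = sInf {r : ℝ≥0∞ | ∃ y : Fin n → ℝ, ∃ y₀ : ℝ,
      (fun j => D j i) ⬝ᵥ y + q i * y₀ = -1 ∧
      (∀ j, (F *ᵥ y) j ≤ y₀ * w j) ∧ 0 ≤ y ∧ 0 ≤ y₀ ∧
      r = ENNReal.ofReal (q ⬝ᵥ y + β * y₀)})
    (hpos : ∀ i : Fin n, (i : ℕ) < k → 0 < mustar i)
    (θ : Fin n → ℝ)
    (hθ : ∀ i : Fin n, θ i = if (i : ℕ) < k then ((mustar i)⁻¹).toReal else 0) :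
    ∃ (Λ : Matrix (Fin M) (Fin n) ℝ) (L : Matrix (Fin n) (Fin n) ℝ) (ℓ : Fin n → ℝ),
      (∀ i j, 0 ≤ Λ i j) ∧ (∀ i j, 0 ≤ L i j) ∧ 0 ≤ ℓ ∧
      DQmat D q β =
        (1 / 2 : ℝ) • ((Gmat F w)ᵀ * midMat L Λ ℓ * Gmat F w) +
        (1 / 2 : ℝ) • (vecMulVec (Sum.elim q fun _ => β) (Sum.elim (-θ) fun _ => 1)) +
        (1 / 2 : ℝ) • (vecMulVec (Sum.elim (-θ) fun _ => 1) (Sum.elim q fun _ => β)) := by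
  classical
  have hθnn : ∀ i, 0 ≤ θ i := by
    intro i; rw [hθ i]; split
    · exact ENNReal.toReal_nonneg
    · exact le_refl 0
  have key : ∀ i : Fin n, (i : ℕ) < k → ∃ lam : Fin M → ℝ, (∀ m, 0 ≤ lam m) ∧
      (∀ j : Fin n, -D j i - θ i * q j ≤ ∑ m, F m j * lam m) ∧
      (∑ m, w m * lam m ≤ q i + β * θ i) := by
    intro i hik
    by_contra hcon
    have hinf : ¬ ∃ x : Fin M → ℝ, (∀ m, 0 ≤ x m) ∧
        ∀ r : Fin n ⊕ Unit, (Sum.elim (fun j => -D j i - θ i * q j)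
          (fun _ => -(q i + β * θ i)) r) ≤
          ∑ m, (Sum.elim (fun j (m : Fin M) => F m j) (fun _ m => -w m) r m) * x m := by
      rintro ⟨x, hx0, hxr⟩
      refine hcon ⟨x, hx0, fun j => by simpa using hxr (Sum.inl j), ?_⟩
      have h1 := hxr (Sum.inr ())
      simp only [Sum.elim_inr] at h1
      have h2 : ∑ m, -w m * x m = -∑ m, w m * x m := by
        rw [← Finset.sum_neg_distrib]; exact Finset.sum_congr rfl fun m _ => by ring
      rw [h2] at h1; linarith
    obtain ⟨u, hu0, huA, hub⟩ := farkas _ _ hinf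
    have hFy : ∀ m, ∑ j, F m j * u (Sum.inl j) ≤ u (Sum.inr ()) * w m := by
      intro m
      have h1 := huA m
      rw [Fintype.sum_sum_type] at h1
      simp only [Sum.elim_inl, Sum.elim_inr, Finset.univ_unique, PUnit.default_eq_unit,
        Finset.sum_singleton, mul_neg] at h1
      have h2 : ∑ j, u (Sum.inl j) * F m j = ∑ j, F m j * u (Sum.inl j) :=
        Finset.sum_congr rfl fun j _ => mul_comm _ _
      rw [h2] at h1
      linarith
    rw [Fintype.sum_sum_type] at hub
    simp only [Sum.elim_inl, Sum.elim_inr, Finset.univ_unique, PUnit.default_eq_unit,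
      Finset.sum_singleton] at hub
    have hexp : ∑ j, (-D j i - θ i * q j) * u (Sum.inl j)
        = -(∑ j, D j i * u (Sum.inl j)) - θ i * ∑ j, q j * u (Sum.inl j) := by
      rw [Finset.mul_sum, ← Finset.sum_neg_distrib, ← Finset.sum_sub_distrib]
      exact Finset.sum_congr rfl fun j _ => by ring
    rw [hexp] at hub
    -- hub : 0 < -SD - θ i * Sq + -(q i + β * θ i) * u₀
    set t : ℝ := -(∑ j, D j i * u (Sum.inl j) + q i * u (Sum.inr ())) with ht
    set S : ℝ := ∑ j, q j * u (Sum.inl j) + β * u (Sum.inr ()) with hS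
    have hSnn : 0 ≤ S := by
      rw [hS]
      exact add_nonneg (Finset.sum_nonneg fun j _ => mul_nonneg (hq j) (hu0 _))
        (mul_nonneg hβ (hu0 _))
    have hθS : θ i * S = θ i * ∑ j, q j * u (Sum.inl j) + θ i * (β * u (Sum.inr ())) := by
      rw [hS]; ring
    have hkey2 : θ i * S < t := by
      rw [ht, hθS]; nlinarith [hub]
    have htpos : 0 < t := lt_of_le_of_lt (mul_nonneg (hθnn i) hSnn) hkey2
    have htne : t ≠ 0 := ne_of_gt htpos
    have hmem : ENNReal.ofReal (S / t) ∈ {r : ℝ≥0∞ | ∃ y : Fin n → ℝ, ∃ y₀ : ℝ,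
        (fun j => D j i) ⬝ᵥ y + q i * y₀ = -1 ∧
        (∀ j, (F *ᵥ y) j ≤ y₀ * w j) ∧ 0 ≤ y ∧ 0 ≤ y₀ ∧
        r = ENNReal.ofReal (q ⬝ᵥ y + β * y₀)} := by
      refine ⟨fun j => u (Sum.inl j) / t, u (Sum.inr ()) / t, ?_, ?_, ?_, ?_, ?_⟩
      · show ∑ j, D j i * (u (Sum.inl j) / t) + q i * (u (Sum.inr ()) / t) = -1
        have e1 : ∑ j, D j i * (u (Sum.inl j) / t) = (∑ j, D j i * u (Sum.inl j)) / t := by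
          rw [Finset.sum_div]; exact Finset.sum_congr rfl fun j _ => (mul_div_assoc _ _ _).symm
        have ht' : ∑ j, D j i * u (Sum.inl j) + q i * u (Sum.inr ()) = -t := by
          rw [ht]; ring
        rw [e1]
        field_simp
        linarith
      · intro m
        show ∑ j, F m j * (u (Sum.inl j) / t) ≤ u (Sum.inr ()) / t * w m
        have e1 : ∑ j, F m j * (u (Sum.inl j) / t) = (∑ j, F m j * u (Sum.inl j)) / t := by
          rw [Finset.sum_div]; exact Finset.sum_congr rfl fun j _ => (mul_div_assoc _ _ _).symm
        have e2 : u (Sum.inr ()) / t * w m = (u (Sum.inr ()) * w m) / t := by ring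
        rw [e1, e2]
        gcongr
        exact hFy m
      · exact fun j => div_nonneg (hu0 _) htpos.le
      · exact div_nonneg (hu0 _) htpos.le
      · show ENNReal.ofReal (S / t)
          = ENNReal.ofReal (∑ j, q j * (u (Sum.inl j) / t) + β * (u (Sum.inr ()) / t))
        congr 1
        rw [hS]
        rw [Finset.sum_congr rfl fun (j : Fin n) _ =>
          (mul_div_assoc (q j) (u (Sum.inl j)) t).symm, ← Finset.sum_div]
        ring
    have hle : mustar i ≤ ENNReal.ofReal (S / t) := by
      rw [hmu i]; exact sInf_le hmem
    rcases eq_or_ne (mustar i) ⊤ with htop | htop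
    · rw [htop, top_le_iff] at hle
      exact ENNReal.ofReal_ne_top hle
    · have hθi : θ i = (mustar i).toReal⁻¹ := by rw [hθ i, if_pos hik, ENNReal.toReal_inv]
      have hμpos : 0 < (mustar i).toReal := ENNReal.toReal_pos (hpos i hik).ne' htop
      have hSt : S / t < (mustar i).toReal := by
        rw [div_lt_iff₀ htpos]
        have h3 : (mustar i).toReal⁻¹ * S < t := by rw [← hθi]; exact hkey2
        calc S = (mustar i).toReal * ((mustar i).toReal⁻¹ * S) := by field_simp
        _ < (mustar i).toReal * t := mul_lt_mul_of_pos_left h3 hμpos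
      have hlt : ENNReal.ofReal (S / t) < mustar i := by
        rw [ENNReal.ofReal_lt_iff_lt_toReal (div_nonneg hSnn htpos.le) htop]; exact hSt
      exact absurd hle hlt.not_ge
  choose lam hlam0 hlamA hlamB using key
  set Λ : Matrix (Fin M) (Fin n) ℝ :=
    Matrix.of (fun m i => if h : (i : ℕ) < k then lam i h m else 0) with hΛ
  have hΛcol : ∀ i : Fin n, (h : (i : ℕ) < k) → ∀ m, Λ m i = lam i h m := by
    intro i h m; rw [hΛ]; exact dif_pos h
  have hΛcol0 : ∀ i : Fin n, k ≤ (i : ℕ) → ∀ m, Λ m i = 0 := by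
    intro i h m; rw [hΛ]; exact dif_neg (not_lt.mpr h)
  refine ⟨Λ, Matrix.of fun a b => D a b + θ b * q a + ∑ m, F m a * Λ m b,
    fun i => q i + β * θ i - ∑ m, w m * Λ m i, ?_, ?_, ?_, assemble D hD q θ β F w Λ⟩
  · intro m i
    rw [hΛ]
    show (0:ℝ) ≤ if h : (i : ℕ) < k then lam i h m else 0
    split
    · exact hlam0 _ _ _
    · exact le_refl 0
  · intro a b
    show (0:ℝ) ≤ D a b + θ b * q a + ∑ m, F m a * Λ m b
    by_cases hb : (b : ℕ) < k
    · have h1 := hlamA b hb a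
      have h2 : ∑ m, F m a * Λ m b = ∑ m, F m a * lam b hb m :=
        Finset.sum_congr rfl fun m _ => by rw [hΛcol b hb m]
      rw [h2]; linarith
    · push_neg at hb
      have h1 : D a b = 0 := hDz a b (Or.inr hb)
      have h2 : θ b = 0 := by rw [hθ b, if_neg (not_lt.mpr hb)]
      have h3 : ∑ m, F m a * Λ m b = 0 := by
        rw [Finset.sum_eq_zero]; intro m _; rw [hΛcol0 b hb m, mul_zero]
      rw [h1, h2, h3]; simp
  · intro i
    show (0:ℝ) ≤ q i + β * θ i - ∑ m, w m * Λ m i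
    by_cases hi : (i : ℕ) < k
    · have h1 := hlamB i hi
      have h2 : ∑ m, w m * Λ m i = ∑ m, w m * lam i hi m :=
        Finset.sum_congr rfl fun m _ => by rw [hΛcol i hi m]
      rw [h2]; linarith
    · push_neg at hi
      have h1 : q i = 0 := hqz i hi
      have h2 : θ i = 0 := by rw [hθ i, if_neg (not_lt.mpr hi)]
      have h3 : ∑ m, w m * Λ m i = 0 := by
        rw [Finset.sum_eq_zero]; intro m _; rw [hΛcol0 i hi m, mul_zero]
      rw [h1, h2, h3]; simp
end

section
/- Let k ≤ n, let D be a symmetric n×n real matrix with D_{ij} = 0 whenever i > k or j > k, let q ∈ ℝⁿ with q ≥ 0 and q_i = 0 for i > k, let β ≥ 0, F ∈ ℝ^{M×n}, w ∈ ℝ^M, and let ȳ ∈ ℝⁿ satisfy ȳ_i = 0 for all i ∈ {1,…,k}. Assume {y ∈ ℝⁿ : y ≥ 0, F y ≤ 0} = {0}, and assume that either β > 0 or q_i > 0 for all i ∈ {1,…,k}. Then there exist an entrywise nonnegative matrix T ∈ ℝ^{(n+M+1)×(n+M+1)} and θ ∈ ℝⁿ such that [D, q; qᵀ, β] = Gᵀ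 T G + ½ (q; β)(−θᵀ, 1 + θᵀȳ) + ½ (−θ; 1 + θᵀȳ)(qᵀ, β), where G := [Iₙ, 0; −F, w; 0ᵀ, 1] ∈ ℝ^{(n+M+1)×(n+1)}. -/
open Matrix

section aux

open Finset

lemma farkas_aux' {n M : ℕ} (F : Matrix (Fin M) (Fin n) ℝ)
    (hbdd : {y : Fin n → ℝ | 0 ≤ y ∧ F *ᵥ y ≤ 0} = {0}) :
    ∃ l : Fin M → ℝ, (∀ m, 0 ≤ l m) ∧ ∀ i : Fin n, 1 ≤ ∑ m, F m i * l m := by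
  classical
  set r : (Fin n ⊕ Fin M) → (Fin M → ℝ) :=
    Sum.elim (fun i m => F m i) (fun m => Pi.single m 1) with hr
  let L : ((Fin n ⊕ Fin M) → ℝ) →ₗ[ℝ] (Fin M → ℝ) :=
    { toFun := fun μ => ∑ j, μ j • r j
      map_add' := by intro x y; simp [add_smul, Finset.sum_add_distrib]
      map_smul' := by intro c x; simp [smul_smul, Finset.smul_sum] }
  set C : Set (Fin M → ℝ) := L '' (stdSimplex ℝ (Fin n ⊕ Fin M)) with hC
  have hconv : Convex ℝ C := (convex_stdSimplex ℝ _).linear_image L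
  have hcomp : IsCompact C :=
    (isCompact_stdSimplex ℝ (Fin n ⊕ Fin M)).image L.continuous_of_finiteDimensional
  have h0 : (0 : Fin M → ℝ) ∉ C := by
    rintro ⟨μ, ⟨hμ0, hμ1⟩, hμ⟩
    have hcoord : ∀ m : Fin M, (∑ i, μ (Sum.inl i) * F m i) + μ (Sum.inr m) = 0 := by
      intro m
      have := congrFun hμ m
      simp only [L, LinearMap.coe_mk, AddHom.coe_mk, Fintype.sum_sum_type] at this
      simpa [r, Finset.sum_apply, Pi.single_apply, mul_comm] using this
    set y : Fin n → ℝ := fun i => μ (Sum.inl i) with hy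
    have hymem : y ∈ {y : Fin n → ℝ | 0 ≤ y ∧ F *ᵥ y ≤ 0} := by
      constructor
      · intro i; exact hμ0 _
      · rw [Pi.le_def]
        intro m
        simp only [Pi.zero_apply]
        have := hcoord m
        have h2 : (F *ᵥ y) m = ∑ i, μ (Sum.inl i) * F m i := by
          simp [Matrix.mulVec, dotProduct, y, mul_comm]
        rw [h2]
        have := hμ0 (Sum.inr m)
        linarith [hcoord m]
    rw [hbdd] at hymem
    have hyz : ∀ i, μ (Sum.inl i) = 0 := fun i => congrFun hymem i
    have hrz : ∀ m, μ (Sum.inr m) = 0 := by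
      intro m
      have := hcoord m
      simp [hyz] at this
      exact this
    rw [Fintype.sum_sum_type] at hμ1
    simp [hyz, hrz] at hμ1
  obtain ⟨f, u, hfu, hu0⟩ :=
    geometric_hahn_banach_closed_point hconv hcomp.isClosed h0
  have hu : u < 0 := by simpa using hu0
  have hmem : ∀ j, r j ∈ C := by
    intro j
    refine ⟨Pi.single j 1, single_mem_stdSimplex ℝ j, ?_⟩
    simp only [L, LinearMap.coe_mk, AddHom.coe_mk]
    rw [Finset.sum_eq_single j]
    · simp
    · intro b _ hb; simp [Pi.single_apply, hb]
    · simp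
  set l0 : Fin M → ℝ := fun m => -(f (Pi.single m 1)) with hl0
  have hl0pos : ∀ m, 0 < l0 m := by
    intro m
    have := hfu _ (hmem (Sum.inr m))
    simp only [r, Sum.elim_inr] at this
    simp only [hl0]
    linarith
  have hfi : ∀ i : Fin n, f (fun m => F m i) = ∑ m, F m i * (-(l0 m)) := by
    intro i
    have := (f : (Fin M → ℝ) →ₗ[ℝ] ℝ).pi_apply_eq_sum_univ (fun m => F m i)
    simp only [ContinuousLinearMap.coe_coe] at this
    rw [this]
    refine Finset.sum_congr rfl fun m _ => ?_
    have hsingle : (fun j => if m = j then (1:ℝ) else 0) = Pi.single m 1 := by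
      funext j; simp [Pi.single_apply, eq_comm]
    rw [hsingle]
    simp [hl0, smul_eq_mul]
  have hvpos : ∀ i : Fin n, 0 < ∑ m, F m i * l0 m := by
    intro i
    have h1 := hfu _ (hmem (Sum.inl i))
    simp only [r, Sum.elim_inl] at h1
    rw [hfi i] at h1
    have : ∑ m, F m i * (-(l0 m)) = -∑ m, F m i * l0 m := by
      simp [Finset.sum_neg_distrib]
    rw [this] at h1
    linarith
  rcases isEmpty_or_nonempty (Fin n) with h | h
  · exact ⟨l0, fun m => (hl0pos m).le, fun i => isEmptyElim i⟩
  · set δ : ℝ := Finset.univ.inf' Finset.univ_nonempty (fun i => ∑ m, F m i * l0 m) with hδ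
    have hδpos : 0 < δ := by
      rw [hδ, Finset.lt_inf'_iff]
      exact fun i _ => hvpos i
    refine ⟨fun m => δ⁻¹ * l0 m,
      fun m => mul_nonneg (inv_nonneg.2 hδpos.le) (hl0pos m).le, fun i => ?_⟩
    have hle : δ ≤ ∑ m, F m i * l0 m := Finset.inf'_le _ (Finset.mem_univ i)
    have : ∑ m, F m i * (δ⁻¹ * l0 m) = δ⁻¹ * ∑ m, F m i * l0 m := by
      rw [Finset.mul_sum]; exact Finset.sum_congr rfl fun m _ => by ring
    rw [this]
    calc (1:ℝ) = δ⁻¹ * δ := by field_simp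
    _ ≤ δ⁻¹ * ∑ m, F m i * l0 m := by
        apply mul_le_mul_of_nonneg_left hle (by positivity)

end aux


noncomputable def Tmat' {n M : ℕ} (D : Matrix (Fin n) (Fin n) ℝ) (q : Fin n → ℝ) (β : ℝ)
    (F : Matrix (Fin M) (Fin n) ℝ) (w : Fin M → ℝ) (θ a : Fin n → ℝ) (l : Fin M → ℝ) :
    Matrix ((Fin n ⊕ Fin M) ⊕ Unit) ((Fin n ⊕ Fin M) ⊕ Unit) ℝ :=
  Matrix.of fun p r =>
    match p, r with
    | Sum.inl (Sum.inl i), Sum.inl (Sum.inl j) =>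
        D i j + (q i * θ j + θ i * q j) / 2
          + a i * (∑ m, F m j * l m) + (∑ m, F m i * l m) * a j
    | Sum.inl (Sum.inl i), Sum.inl (Sum.inr m) => a i * l m
    | Sum.inl (Sum.inr m), Sum.inl (Sum.inl j) => l m * a j
    | Sum.inl (Sum.inr _), Sum.inl (Sum.inr _) => 0
    | Sum.inl (Sum.inl i), Sum.inr _ => q i / 2 + β / 2 * θ i - (∑ m, l m * w m) * a i
    | Sum.inr _, Sum.inl (Sum.inl j) => q j / 2 + β / 2 * θ j - (∑ m, l m * w m) * a j
    | Sum.inl (Sum.inr _), Sum.inr _ => 0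
    | Sum.inr _, Sum.inl (Sum.inr _) => 0
    | Sum.inr _, Sum.inr _ => 0

lemma key' {n M : ℕ} (D : Matrix (Fin n) (Fin n) ℝ) (q : Fin n → ℝ) (β : ℝ)
    (F : Matrix (Fin M) (Fin n) ℝ) (w : Fin M → ℝ) (ybar θ a : Fin n → ℝ) (l : Fin M → ℝ)
    (hθy : θ ⬝ᵥ ybar = 0) :
    DQmat D q β =
      (Gmat F w)ᵀ * (Tmat' D q β F w θ a l) * Gmat F w +
      (1 / 2 : ℝ) • (vecMulVec (Sum.elim q fun _ => β)
        (Sum.elim (-θ) fun _ => 1 + θ ⬝ᵥ ybar)) +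
      (1 / 2 : ℝ) • (vecMulVec (Sum.elim (-θ) fun _ => 1 + θ ⬝ᵥ ybar)
        (Sum.elim q fun _ => β)) := by
  rw [hθy]
  ext p r
  rcases p with i | _ <;> rcases r with j | _ <;>
    simp [DQmat, Gmat, Tmat', Matrix.mul_apply, Fintype.sum_sum_type, vecMulVec_apply,
      Finset.sum_add_distrib, Finset.sum_sub_distrib, Finset.mul_sum, Finset.sum_mul,
      ite_mul, mul_ite] <;> ring_nf <;> simp [mul_comm, mul_left_comm, mul_assoc]

/-- Proposition `prop:LPexistence`. Assume the recession cone
condition `{y ≥ 0, Fy ≤ 0} = {0}` (boundedness of the feasible region) and that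
`β > 0` or `q_i > 0` for all `i ≤ k`. Then there exist an entrywise nonnegative
`T` and `θ` with
`[D, q; qᵀ, β] = Gᵀ T G + ½ (q; β)(−θᵀ, 1 + θᵀȳ) + ½ (−θ; 1 + θᵀȳ)(qᵀ, β)`. -/
theorem konno_certificate_exists {n M k : ℕ} (hkn : k ≤ n)
    (D : Matrix (Fin n) (Fin n) ℝ) (hD : D.IsSymm)
    (hDz : ∀ i j : Fin n, k ≤ (i : ℕ) ∨ k ≤ (j : ℕ) → D i j = 0)
    (q : Fin n → ℝ) (hq : 0 ≤ q) (hqz : ∀ i : Fin n, k ≤ (i : ℕ) → q i = 0)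
    (β : ℝ) (hβ : 0 ≤ β)
    (F : Matrix (Fin M) (Fin n) ℝ) (w : Fin M → ℝ)
    (ybar : Fin n → ℝ) (hybar : ∀ i : Fin n, (i : ℕ) < k → ybar i = 0)
    (hbdd : {y : Fin n → ℝ | 0 ≤ y ∧ F *ᵥ y ≤ 0} = {0})
    (hcase : 0 < β ∨ ∀ i : Fin n, (i : ℕ) < k → 0 < q i) :
    ∃ (T : Matrix ((Fin n ⊕ Fin M) ⊕ Unit) ((Fin n ⊕ Fin M) ⊕ Unit) ℝ)
      (θ : Fin n → ℝ),
      (∀ i j, 0 ≤ T i j) ∧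
      DQmat D q β =
        (Gmat F w)ᵀ * T * Gmat F w +
        (1 / 2 : ℝ) • (vecMulVec (Sum.elim q fun _ => β)
          (Sum.elim (-θ) fun _ => 1 + θ ⬝ᵥ ybar)) +
        (1 / 2 : ℝ) • (vecMulVec (Sum.elim (-θ) fun _ => 1 + θ ⬝ᵥ ybar)
          (Sum.elim q fun _ => β)) := by
  classical
  set B : ℝ := ∑ i, ∑ j, |D i j| with hBdef
  have hB0 : 0 ≤ B := Finset.sum_nonneg fun i _ =>
    Finset.sum_nonneg fun j _ => abs_nonneg _
  have hB : ∀ i j, |D i j| ≤ B := by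
    intro i j
    calc |D i j| ≤ ∑ j', |D i j'| :=
          Finset.single_le_sum (f := fun j' => |D i j'|)
            (fun j' _ => abs_nonneg _) (Finset.mem_univ j)
    _ ≤ B := Finset.single_le_sum (f := fun i' => ∑ j', |D i' j'|)
          (fun i' _ => Finset.sum_nonneg fun j' _ => abs_nonneg _) (Finset.mem_univ i)
  rcases hcase with hβpos | hqpos
  · -- case β > 0 : use Farkas
    obtain ⟨l, hl0, hl1⟩ := farkas_aux' F hbdd
    set c : ℝ := ∑ m, l m * w m with hcdef
    set s : ℝ := 2 * B * (1 + |c|) / β with hsdef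
    have hs0 : 0 ≤ s := by positivity
    set θ : Fin n → ℝ := fun i => if (i : ℕ) < k then s else 0 with hθdef
    set a : Fin n → ℝ := fun i => if (i : ℕ) < k then B else 0 with hadef
    have hθ0 : ∀ i, 0 ≤ θ i := by
      intro i; simp only [hθdef]; split <;> simp [hs0]
    have ha0 : ∀ i, 0 ≤ a i := by
      intro i; simp only [hadef]; split <;> simp [hB0]
    have hθy : θ ⬝ᵥ ybar = 0 := by
      apply Finset.sum_eq_zero
      intro i _
      by_cases hik : (i : ℕ) < k
      · simp [hybar i hik]
      · simp [hθdef, hik]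
    refine ⟨Tmat' D q β F w θ a l, θ, ?_, key' D q β F w ybar θ a l hθy⟩
    intro p r
    rcases p with ⟨i | m⟩ | u <;> rcases r with ⟨j | m'⟩ | u' <;>
      simp only [Tmat', Matrix.of_apply, le_refl]
    · -- T11
      by_cases hik : (i : ℕ) < k <;> by_cases hjk : (j : ℕ) < k
      · have hDij : -B ≤ D i j := neg_le_of_abs_le (hB i j)
        have hui : (1:ℝ) ≤ ∑ m, F m i * l m := hl1 i
        have huj : (1:ℝ) ≤ ∑ m, F m j * l m := hl1 j
        have hmid : 0 ≤ (q i * θ j + θ i * q j) / 2 :=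
          div_nonneg (add_nonneg (mul_nonneg (hq i) (hθ0 j))
            (mul_nonneg (hθ0 i) (hq j))) (by norm_num)
        simp only [hadef, hik, hjk, if_pos]
        nlinarith [mul_le_mul_of_nonneg_left hui hB0, mul_le_mul_of_nonneg_left huj hB0]
      · have hD0 : D i j = 0 := hDz i j (Or.inr (not_lt.1 hjk))
        have hq0 : q j = 0 := hqz j (not_lt.1 hjk)
        have haj : a j = 0 := by simp [hadef, hjk]
        have hθj : θ j = 0 := by simp [hθdef, hjk]
        simp only [hD0, hq0, haj, hθj, mul_zero, zero_mul, add_zero, zero_add]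
        have : 0 ≤ a i * ∑ m, F m j * l m :=
          mul_nonneg (ha0 i) (le_trans zero_le_one (hl1 j))
        linarith [mul_nonneg (hθ0 i) (le_of_eq (rfl : (0:ℝ) = 0))]
      · have hD0 : D i j = 0 := hDz i j (Or.inl (not_lt.1 hik))
        have hq0 : q i = 0 := hqz i (not_lt.1 hik)
        have hai : a i = 0 := by simp [hadef, hik]
        have hθi : θ i = 0 := by simp [hθdef, hik]
        have h2 : 0 ≤ (∑ m, F m i * l m) * a j :=
          mul_nonneg (le_trans zero_le_one (hl1 i)) (ha0 j)
        simp only [hD0, hq0, hai, hθi, mul_zero, zero_mul, add_zero, zero_add]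
        linarith
      · have hD0 : D i j = 0 := hDz i j (Or.inl (not_lt.1 hik))
        have hq0 : q i = 0 := hqz i (not_lt.1 hik)
        have hai : a i = 0 := by simp [hadef, hik]
        have hθi : θ i = 0 := by simp [hθdef, hik]
        have haj : a j = 0 := by simp [hadef, hjk]
        have hθj : θ j = 0 := by simp [hθdef, hjk]
        have hqj : q j = 0 := hqz j (not_lt.1 hjk)
        simp [hD0, hq0, hai, hθi, haj, hθj, hqj]
    · exact mul_nonneg (ha0 i) (hl0 m')
    · -- t13
      by_cases hik : (i : ℕ) < k
      · have hθi : θ i = s := by simp [hθdef, hik]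
        have hai : a i = B := by simp [hadef, hik]
        rw [hθi, hai]
        have hβs : β / 2 * s = B * (1 + |c|) := by
          rw [hsdef]; field_simp
        have hcB : c * B ≤ |c| * B := mul_le_mul_of_nonneg_right (le_abs_self c) hB0
        have hqi : (0:ℝ) ≤ q i := hq i
        rw [← hcdef, hβs]
        nlinarith
      · have hθi : θ i = 0 := by simp [hθdef, hik]
        have hai : a i = 0 := by simp [hadef, hik]
        have hq0 : q i = 0 := hqz i (not_lt.1 hik)
        simp [hθi, hai, hq0]
    · exact mul_nonneg (hl0 m) (ha0 j)
    · -- t31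
      by_cases hjk : (j : ℕ) < k
      · have hθj : θ j = s := by simp [hθdef, hjk]
        have haj : a j = B := by simp [hadef, hjk]
        rw [hθj, haj]
        have hβs : β / 2 * s = B * (1 + |c|) := by
          rw [hsdef]; field_simp
        have hcB : c * B ≤ |c| * B := mul_le_mul_of_nonneg_right (le_abs_self c) hB0
        have hqj : (0:ℝ) ≤ q j := hq j
        rw [← hcdef, hβs]
        nlinarith
      · have hθj : θ j = 0 := by simp [hθdef, hjk]
        have haj : a j = 0 := by simp [hadef, hjk]
        have hq0 : q j = 0 := hqz j (not_lt.1 hjk)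
        simp [hθj, haj, hq0]
  · -- case q positive on {i < k}
    set θ : Fin n → ℝ := fun i => if h : (i : ℕ) < k then B / q i else 0 with hθdef
    have hθ0 : ∀ i, 0 ≤ θ i := by
      intro i
      simp only [hθdef]
      split
      · next h => exact div_nonneg hB0 (hqpos i h).le
      · exact le_refl 0
    have hθy : θ ⬝ᵥ ybar = 0 := by
      apply Finset.sum_eq_zero
      intro i _
      by_cases hik : (i : ℕ) < k
      · simp [hybar i hik]
      · simp [hθdef, hik]
    refine ⟨Tmat' D q β F w θ 0 0, θ, ?_, key' D q β F w ybar θ 0 0 hθy⟩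
    intro p r
    rcases p with ⟨i | m⟩ | u <;> rcases r with ⟨j | m'⟩ | u' <;>
      simp only [Tmat', Matrix.of_apply, Pi.zero_apply, mul_zero, zero_mul, add_zero,
        sub_zero, Finset.sum_const_zero, le_refl]
    · -- T11
      by_cases hik : (i : ℕ) < k <;> by_cases hjk : (j : ℕ) < k
      · have hqi := hqpos i hik
        have hqj := hqpos j hjk
        have hθi : θ i = B / q i := by simp [hθdef, hik]
        have hθj : θ j = B / q j := by simp [hθdef, hjk]
        rw [hθi, hθj]
        have hkey : q i * (B / q j) + B / q i * q j - 2 * B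
            = B * (q i - q j) ^ 2 / (q i * q j) := by
          field_simp
          ring
        have hpos : 0 ≤ B * (q i - q j) ^ 2 / (q i * q j) := by positivity
        have hDij : -B ≤ D i j := neg_le_of_abs_le (hB i j)
        linarith
      · have hD0 : D i j = 0 := hDz i j (Or.inr (not_lt.1 hjk))
        have hq0 : q j = 0 := hqz j (not_lt.1 hjk)
        have hθj : θ j = 0 := by simp [hθdef, hjk]
        simp [hD0, hq0, hθj]
      · have hD0 : D i j = 0 := hDz i j (Or.inl (not_lt.1 hik))
        have hq0 : q i = 0 := hqz i (not_lt.1 hik)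
        have hθi : θ i = 0 := by simp [hθdef, hik]
        simp [hD0, hq0, hθi]
      · have hD0 : D i j = 0 := hDz i j (Or.inl (not_lt.1 hik))
        have hq0 : q i = 0 := hqz i (not_lt.1 hik)
        have hθi : θ i = 0 := by simp [hθdef, hik]
        simp [hD0, hq0, hθi]
    · -- t13
      have h1 : (0:ℝ) ≤ q i := hq i
      have h2 : 0 ≤ β / 2 * θ i := mul_nonneg (div_nonneg hβ (by norm_num)) (hθ0 i)
      linarith
    · -- t31
      have h1 : (0:ℝ) ≤ q j := hq j
      have h2 : 0 ≤ β / 2 * θ j := mul_nonneg (div_nonneg hβ (by norm_num)) (hθ0 j)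
      linarith
end
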